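/- Let G be a finite simple graph on n vertices containing a vertex v incident with exactly one edge, with unique neighbor u, and let H be the induced subgraph obtained by deleting both v and u (and all edges incident with them). Then the nullity of G equals the nullity of H; equivalently, n − r(G) = (n−2) − r(H), where r denotes the rank over ℝ of the adjacency matrix. -/

import Mathlib

attribute [local instance] Classical.propDecidable

open Finset Matrix SimpleGraph Module

/-- If `v` is a vertex of degree one with (unique) neighbor `u`, then deleting both `v` and
`u` preserves the nullity of the adjacency matrix:
`n - r(G) = (n - 2) - r(H)` where `H = G - {v, u}`. -/
theorem nullity_delete_pendant {V : Type*} [Fintype V] (G : SimpleGraph V) (v u : V)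
    (hdeg : G.degree v = 1) (hadj : G.Adj v u) :
    Fintype.card V - (G.adjMatrix ℝ).rank =
      (Fintype.card V - 2) - ((G.induce {v, u}ᶜ).adjMatrix ℝ).rank := by
  classical
  have hvu : v ≠ u := hadj.ne
  -- unique neighbor of v
  have hNv : G.neighborFinset v = {u} := by
    obtain ⟨a, ha⟩ := Finset.card_eq_one.mp (by rw [← G.card_neighborFinset_eq_degree] at hdeg; exact hdeg)
    have hu : u ∈ G.neighborFinset v := by simpa using hadj
    rw [ha] at hu ⊢
    simp at hu
    subst hu; rfl
  have hAdjv : ∀ w, G.Adj v w ↔ w = u := by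
    intro w
    rw [← SimpleGraph.mem_neighborFinset, hNv, Finset.mem_singleton]
  set S : Set V := {v, u}ᶜ with hS
  have hvS : v ∉ S := by simp [hS]
  have huS : u ∉ S := by simp [hS]
  set A := G.adjMatrix ℝ with hA
  set B := (G.induce S).adjMatrix ℝ with hB
  -- splitting sums
  have hsplit : ∀ f : V → ℝ, ∑ y, f y = f v + f u + ∑ y : S, f ↑y := by
    intro f
    rw [← Finset.sum_add_sum_compl ({v, u} : Finset V) f, Finset.sum_pair hvu]
    congr 1
    exact Finset.sum_subtype _ (fun y => by simp [hS]) f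
  -- entries
  have hAentry : ∀ i j, A i j = if G.Adj i j then 1 else 0 := fun i j => by
    simp [hA, Matrix.of_apply]
  have hBentry : ∀ (i j : S), B i j = if G.Adj ↑i ↑j then 1 else 0 := fun i j => by
    simp [hB]
  -- row computations
  have rowv : ∀ x : V → ℝ, (A *ᵥ x) v = x u := by
    intro x
    rw [hA, SimpleGraph.adjMatrix_mulVec_apply, hNv, Finset.sum_singleton]
  have rowS : ∀ (x : V → ℝ) (w : V) (hw : w ∈ S),
      (A *ᵥ x) w = A w u * x u + (B *ᵥ fun y : S => x ↑y) ⟨w, hw⟩ := by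
    intro x w hw
    have hwv : ¬ G.Adj w v := by
      intro h
      have := (hAdjv w).mp h.symm
      exact (by simpa [hS, this] using hw)
    have hwu : w ≠ u := by intro h; exact huS (h ▸ hw)
    calc (A *ᵥ x) w = ∑ y, A w y * x y := by rw [Matrix.mulVec, dotProduct]
      _ = A w v * x v + A w u * x u + ∑ y : S, A w ↑y * x ↑y := hsplit _
      _ = A w u * x u + (B *ᵥ fun y : S => x ↑y) ⟨w, hw⟩ := by
          rw [hAentry, if_neg hwv]
          rw [Matrix.mulVec, dotProduct]
          simp only [hBentry, hAentry]
          ring_nf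
  have rowu : ∀ x : V → ℝ, (A *ᵥ x) u = x v + ∑ y : S, A u ↑y * x ↑y := by
    intro x
    calc (A *ᵥ x) u = ∑ y, A u y * x y := by rw [Matrix.mulVec, dotProduct]
      _ = A u v * x v + A u u * x u + ∑ y : S, A u ↑y * x ↑y := hsplit _
      _ = x v + ∑ y : S, A u ↑y * x ↑y := by
          rw [hAentry, if_pos hadj.symm, hAentry, if_neg (G.loopless.irrefl u), one_mul, zero_mul, add_zero]
  -- kernel maps
  let res : (V → ℝ) →ₗ[ℝ] (S → ℝ) := LinearMap.funLeft ℝ ℝ (fun y : S => (y : V))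
  have hmap : ∀ x ∈ LinearMap.ker A.mulVecLin, res x ∈ LinearMap.ker B.mulVecLin := by
    intro x hx
    rw [LinearMap.mem_ker, Matrix.mulVecLin_apply] at hx ⊢
    have hx' : ∀ w, (A *ᵥ x) w = 0 := fun w => by rw [hx]; rfl
    have hxu : x u = 0 := by rw [← rowv x]; exact hx' v
    funext w
    obtain ⟨w, hw⟩ := w
    have h := rowS x w hw
    rw [hx' w, hxu, mul_zero, zero_add] at h
    exact h.symm
  let φ : LinearMap.ker A.mulVecLin →ₗ[ℝ] LinearMap.ker B.mulVecLin := res.restrict hmap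
  have hinj : Function.Injective φ := by
    rw [injective_iff_map_eq_zero]
    rintro ⟨x, hx⟩ h0
    rw [LinearMap.mem_ker, Matrix.mulVecLin_apply] at hx
    have hx' : ∀ w, (A *ᵥ x) w = 0 := fun w => by rw [hx]; rfl
    have h0' : ∀ y : S, x ↑y = 0 := by
      intro y
      have := congrArg Subtype.val h0
      exact congrFun this y
    have hxu : x u = 0 := by rw [← rowv x]; exact hx' v
    have hxv : x v = 0 := by
      have h := rowu x
      rw [hx' u] at h
      have : ∑ y : S, A u ↑y * x ↑y = 0 :=
        Finset.sum_eq_zero fun y _ => by rw [h0' y, mul_zero]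
      rw [this, add_zero] at h
      exact h.symm
    ext w
    by_cases hw : w ∈ S
    · exact h0' ⟨w, hw⟩
    · have : w ∈ ({v, u} : Set V) := not_not.mp (by simpa [hS] using hw)
      rcases this with rfl | rfl
      · exact hxv
      · exact hxu
  have hsurj : Function.Surjective φ := by
    rintro ⟨z, hz⟩
    rw [LinearMap.mem_ker, Matrix.mulVecLin_apply] at hz
    have hz' : ∀ w, (B *ᵥ z) w = 0 := fun w => by rw [hz]; rfl
    set c : ℝ := ∑ y : S, A u ↑y * z y with hc
    set x : V → ℝ := fun w => if h : w ∈ S then z ⟨w, h⟩ else if w = v then -c else 0 with hxdef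
    have hresx : (fun y : S => x ↑y) = z := by
      funext y
      simp only [hxdef, dif_pos y.2]
    have hxu : x u = 0 := by
      simp only [hxdef, dif_neg huS, if_neg (fun h : u = v => hvu h.symm)]
    have hxv : x v = -c := by simp only [hxdef, dif_neg hvS]; simp
    have hx : A *ᵥ x = 0 := by
      funext w
      by_cases hw : w ∈ S
      · rw [rowS x w hw, hxu, mul_zero, zero_add, hresx, hz' ⟨w, hw⟩]; rfl
      · have : w ∈ ({v, u} : Set V) := not_not.mp (by simpa [hS] using hw)
        rcases this with rfl | rfl
        · rw [rowv x, hxu]; rfl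
        · rw [rowu x, hxv]
          have : ∑ y : S, A w ↑y * x ↑y = c := by
            rw [hc]
            exact Finset.sum_congr rfl fun y _ => by rw [show x ↑y = z y from congrFun hresx y]
          rw [this, neg_add_cancel]; rfl
    refine ⟨⟨x, ?_⟩, ?_⟩
    · rw [LinearMap.mem_ker, Matrix.mulVecLin_apply]; exact hx
    · apply Subtype.ext
      exact hresx
  have hker : finrank ℝ (LinearMap.ker A.mulVecLin) = finrank ℝ (LinearMap.ker B.mulVecLin) :=
    (LinearEquiv.ofBijective φ ⟨hinj, hsurj⟩).finrank_eq
  -- rank-nullity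
  have h1 : A.rank + finrank ℝ (LinearMap.ker A.mulVecLin) = Fintype.card V := by
    have h := LinearMap.finrank_range_add_finrank_ker A.mulVecLin
    rwa [Module.finrank_pi] at h
  have h2 : B.rank + finrank ℝ (LinearMap.ker B.mulVecLin) = Fintype.card S := by
    have h := LinearMap.finrank_range_add_finrank_ker B.mulVecLin
    rwa [Module.finrank_pi] at h
  have hcardS : Fintype.card S = Fintype.card V - 2 := by
    rw [← Set.toFinset_card]
    have ht : S.toFinset = ({v, u} : Finset V)ᶜ := by ext y; simp [hS]
    rw [ht, Finset.card_compl, Finset.card_pair hvu]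
  have hrle : A.rank ≤ Fintype.card V := A.rank_le_card_width
  show Fintype.card V - A.rank = (Fintype.card V - 2) - B.rank
  omega
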